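/- Suppose p, q, p′ are positive integers with no common divisor satisfying 3p² + p′² = 3q², and cos α = p/q, √3 sin α = p′/q for some α ∈ (0, π/3). Let d = gcd(2(p+q), p+q+p′), a = 2(p+q)/d, b = (p+q+p′)/d. Then a and b are coprime integers satisfying cos α = (a² + 2ab − 2b²)/(2(a² − ab + b²)) and √3 sin α = 3a(2b − a)/(2(a² − ab + b²)). -/

import Mathlib

open Real

/-- From positive integers `p, q, p′` with no common divisor satisfying `3p² + p′² = 3q²`,
with `cos α = p/q`, `√3 sin α = p′/q`, `d = gcd(2(p+q), p+q+p′)`, `a = 2(p+q)/d`,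
`b = (p+q+p′)/d`, the integers `a, b` are coprime and give the rational parametrization
of `cos α` and `√3 sin α`. -/
theorem stmt4 (p q p' : ℤ) (hp : 0 < p) (hq : 0 < q) (hp' : 0 < p')
    (hgcd : Int.gcd (Int.gcd p q) p' = 1)
    (hpyth : 3*p^2 + p'^2 = 3*q^2)
    (α : ℝ) (hα0 : 0 < α) (hα1 : α < π/3)
    (hcos : Real.cos α = (p:ℝ)/(q:ℝ))
    (hsin : Real.sqrt 3 * Real.sin α = (p':ℝ)/(q:ℝ))
    (d a b : ℤ) (hd : d = Int.gcd (2*(p+q)) (p+q+p'))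
    (ha : a = 2*(p+q) / d) (hb : b = (p+q+p') / d) :
    IsCoprime a b ∧
    Real.cos α = ((a:ℝ)^2 + 2*(a:ℝ)*(b:ℝ) - 2*(b:ℝ)^2) /
      (2*((a:ℝ)^2 - (a:ℝ)*(b:ℝ) + (b:ℝ)^2)) ∧
    Real.sqrt 3 * Real.sin α = 3*(a:ℝ)*(2*(b:ℝ) - (a:ℝ)) /
      (2*((a:ℝ)^2 - (a:ℝ)*(b:ℝ) + (b:ℝ)^2)) := by
  have hA0 : (0:ℤ) < 2*(p+q) := by linarith
  have hgpos : 0 < Int.gcd (2*(p+q)) (p+q+p') :=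
    Int.gcd_pos_of_ne_zero_left _ (by positivity)
  have hd0 : (0:ℤ) < d := by rw [hd]; exact_mod_cast hgpos
  have hdvd1 : d ∣ 2*(p+q) := hd ▸ Int.gcd_dvd_left _ _
  have hdvd2 : d ∣ p+q+p' := hd ▸ Int.gcd_dvd_right _ _
  have hA : a * d = 2*(p+q) := by rw [ha]; exact Int.ediv_mul_cancel hdvd1
  have hB : b * d = p+q+p' := by rw [hb]; exact Int.ediv_mul_cancel hdvd2
  have hcop : IsCoprime a b := by
    rw [Int.isCoprime_iff_gcd_eq_one, ha, hb, hd]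
    exact Int.gcd_div_gcd_div_gcd hgpos
  have ha0 : (0:ℤ) < a := by
    rcases lt_trichotomy a 0 with h | h | h
    · nlinarith
    · simp [h] at hA; nlinarith
    · exact h
  have hden0 : (0:ℤ) < 2*(a^2 - a*b + b^2) := by nlinarith [sq_nonneg (2*a - b), sq_nonneg b]
  have hd2 : (d:ℤ)^2 ≠ 0 := pow_ne_zero 2 (ne_of_gt hd0)
  -- cosine key identity over ℤ
  have key1 : p * (2*(a^2 - a*b + b^2)) = (a^2 + 2*a*b - 2*b^2) * q := by
    have : p * (2*(a^2 - a*b + b^2)) * d^2 = (a^2 + 2*a*b - 2*b^2) * q * d^2 := by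
      have e1 : p * (2*(a^2 - a*b + b^2)) * d^2
          = p * (2*((a*d)^2 - (a*d)*(b*d) + (b*d)^2)) := by ring
      have e2 : (a^2 + 2*a*b - 2*b^2) * q * d^2
          = ((a*d)^2 + 2*(a*d)*(b*d) - 2*(b*d)^2) * q := by ring
      rw [e1, e2, hA, hB]
      linear_combination (2*(p+q)) * hpyth
    exact mul_right_cancel₀ hd2 this
  have key2 : p' * (2*(a^2 - a*b + b^2)) = (3*a*(2*b - a)) * q := by
    have : p' * (2*(a^2 - a*b + b^2)) * d^2 = (3*a*(2*b - a)) * q * d^2 := by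
      have e1 : p' * (2*(a^2 - a*b + b^2)) * d^2
          = p' * (2*((a*d)^2 - (a*d)*(b*d) + (b*d)^2)) := by ring
      have e2 : (3*a*(2*b - a)) * q * d^2
          = (3*(a*d)*(2*(b*d) - (a*d))) * q := by ring
      rw [e1, e2, hA, hB]
      linear_combination (2*p') * hpyth
    exact mul_right_cancel₀ hd2 this
  have hqR : (q:ℝ) ≠ 0 := Int.cast_ne_zero.mpr (ne_of_gt hq)
  have hdenR : (2*((a:ℝ)^2 - (a:ℝ)*(b:ℝ) + (b:ℝ)^2)) ≠ 0 := by
    have : ((2*(a^2 - a*b + b^2) : ℤ) : ℝ) ≠ 0 := Int.cast_ne_zero.mpr (ne_of_gt hden0)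
    push_cast at this
    exact this
  refine ⟨hcop, ?_, ?_⟩
  · rw [hcos, div_eq_div_iff hqR hdenR]
    have := congrArg (fun x : ℤ => (x:ℝ)) key1
    push_cast at this
    linarith [this]
  · rw [hsin, div_eq_div_iff hqR hdenR]
    have := congrArg (fun x : ℤ => (x:ℝ)) key2
    push_cast at this
    linarith [this]
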